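/- Let X be a finite-valued random variable, and suppose nonnegative reals R, R1, R2, R' and finite-valued random variables Q, U, V are given such that U and V are independent, H(U) ≤ R1, H(V) ≤ R2, R ≥ I(Q;V|U) + R', R ≥ I(Q;U|V) + R', and H(X) ≤ I(Q;U,V) + R'. If additionally R' = 0, then 2R ≥ H(X); and in all cases R + R1 ≥ H(X) and R + R2 ≥ H(X). -/

import Mathlib

open scoped BigOperators

/-- A probability mass function on a finite sample space. -/
structure FinPMF (Ω : Type*) [Fintype Ω] where
  p : Ω → ℝ
  nonneg : ∀ ω, 0 ≤ p ω
  sum_one : ∑ ω, p ω = 1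

namespace FinPMF

variable {Ω : Type*} [Fintype Ω]

/-- Probability that the random variable `X` takes the value `a`. -/
def pr (μ : FinPMF Ω) {A : Type*} [DecidableEq A] (X : Ω → A) (a : A) : ℝ :=
  ∑ ω, if X ω = a then μ.p ω else 0

/-- Shannon entropy (base 2, i.e. in bits) of the random variable `X`. -/
noncomputable def H (μ : FinPMF Ω) {A : Type*} [Fintype A] [DecidableEq A]
    (X : Ω → A) : ℝ :=
  -∑ a, μ.pr X a * Real.logb 2 (μ.pr X a)

/-- Conditional entropy `H(X|Z)`. -/
noncomputable def CondH (μ : FinPMF Ω) {A C : Type*} [Fintype A] [DecidableEq A]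
    [Fintype C] [DecidableEq C] (X : Ω → A) (Z : Ω → C) : ℝ :=
  μ.H (fun ω => (X ω, Z ω)) - μ.H Z

/-- Mutual information `I(X;Y)`. -/
noncomputable def I2 (μ : FinPMF Ω) {A B : Type*} [Fintype A] [DecidableEq A]
    [Fintype B] [DecidableEq B] (X : Ω → A) (Y : Ω → B) : ℝ :=
  μ.H X + μ.H Y - μ.H (fun ω => (X ω, Y ω))

/-- Conditional mutual information `I(X;Y|Z)`. -/
noncomputable def CI (μ : FinPMF Ω) {A B C : Type*} [Fintype A] [DecidableEq A]
    [Fintype B] [DecidableEq B] [Fintype C] [DecidableEq C]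
    (X : Ω → A) (Y : Ω → B) (Z : Ω → C) : ℝ :=
  μ.H (fun ω => (X ω, Z ω)) + μ.H (fun ω => (Y ω, Z ω))
    - μ.H (fun ω => (X ω, Y ω, Z ω)) - μ.H Z

/-- `X` and `Y` are independent. -/
def Indep (μ : FinPMF Ω) {A B : Type*} [DecidableEq A] [DecidableEq B]
    (X : Ω → A) (Y : Ω → B) : Prop :=
  ∀ a b, μ.pr (fun ω => (X ω, Y ω)) (a, b) = μ.pr X a * μ.pr Y b

/-- `X` and `Y` are conditionally independent given `Z` (Markov chain `X − Z − Y`). -/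
def CondIndep (μ : FinPMF Ω) {A B C : Type*} [DecidableEq A] [DecidableEq B]
    [DecidableEq C] (X : Ω → A) (Y : Ω → B) (Z : Ω → C) : Prop :=
  ∀ a b c, μ.pr (fun ω => (X ω, Y ω, Z ω)) (a, b, c) * μ.pr Z c
    = μ.pr (fun ω => (X ω, Z ω)) (a, c) * μ.pr (fun ω => (Y ω, Z ω)) (b, c)

end FinPMF

/-- Binary entropy function (base 2). -/
noncomputable def binEnt (t : ℝ) : ℝ :=
  -(t * Real.logb 2 t) - (1 - t) * Real.logb 2 (1 - t)



namespace FinPMF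

variable {Ω : Type*} [Fintype Ω]

lemma pr_nonneg' (μ : FinPMF Ω) {A : Type*} [DecidableEq A] (X : Ω → A) (a : A) :
    0 ≤ μ.pr X a :=
  Finset.sum_nonneg fun ω _ => by by_cases h : X ω = a <;> simp [h, μ.nonneg ω]

lemma sum_pr' (μ : FinPMF Ω) {A : Type*} [Fintype A] [DecidableEq A] (X : Ω → A) :
    ∑ a, μ.pr X a = 1 := by
  rw [← μ.sum_one]
  simp only [pr]
  rw [Finset.sum_comm]
  exact Finset.sum_congr rfl fun ω _ => by simp

lemma pr_comp' (μ : FinPMF Ω) {A B : Type*} [DecidableEq A] [Fintype B] [DecidableEq B]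
    (W : Ω → B) (f : B → A) (a : A) :
    μ.pr (fun ω => f (W ω)) a = ∑ b, if f b = a then μ.pr W b else 0 := by
  simp only [pr]
  have : ∀ b : B, (if f b = a then ∑ ω, if W ω = b then μ.p ω else 0 else 0)
      = ∑ ω, if f b = a ∧ W ω = b then μ.p ω else 0 := by
    intro b; split <;> simp_all
  rw [Finset.sum_congr rfl fun b _ => this b, Finset.sum_comm]
  refine Finset.sum_congr rfl fun ω _ => ?_
  rw [Finset.sum_eq_single (W ω)]
  · simp
  · intro b _ hb; simp [Ne.symm hb]
  · simp

lemma phi_superadd {B : Type*} (s : Finset B) (g : B → ℝ) (hg : ∀ b ∈ s, 0 ≤ g b) :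
    ∑ b ∈ s, g b * Real.logb 2 (g b) ≤ (∑ b ∈ s, g b) * Real.logb 2 (∑ b ∈ s, g b) := by
  set S := ∑ b ∈ s, g b with hS
  have : ∀ b ∈ s, g b * Real.logb 2 (g b) ≤ g b * Real.logb 2 S := by
    intro b hb
    rcases eq_or_lt_of_le (hg b hb) with h | h
    · simp [← h]
    · exact mul_le_mul_of_nonneg_left
        (Real.logb_le_logb_of_le (by norm_num) h (Finset.single_le_sum hg hb)) (hg b hb)
  calc ∑ b ∈ s, g b * Real.logb 2 (g b) ≤ ∑ b ∈ s, g b * Real.logb 2 S :=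
        Finset.sum_le_sum this
    _ = S * Real.logb 2 S := by rw [← Finset.sum_mul]

lemma H_comp_le' (μ : FinPMF Ω) {A B : Type*} [Fintype A] [DecidableEq A]
    [Fintype B] [DecidableEq B] (W : Ω → B) (f : B → A) :
    μ.H (fun ω => f (W ω)) ≤ μ.H W := by
  simp only [H]
  rw [neg_le_neg_iff]
  have key : ∀ a : A, ∑ b ∈ Finset.univ.filter (fun b => f b = a),
        μ.pr W b * Real.logb 2 (μ.pr W b)
      ≤ μ.pr (fun ω => f (W ω)) a * Real.logb 2 (μ.pr (fun ω => f (W ω)) a) := by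
    intro a
    rw [μ.pr_comp' W f a, ← Finset.sum_filter]
    exact phi_superadd _ _ (fun b _ => μ.pr_nonneg' W b)
  calc ∑ b, μ.pr W b * Real.logb 2 (μ.pr W b)
      = ∑ a : A, ∑ b ∈ Finset.univ.filter (fun b => f b = a),
          μ.pr W b * Real.logb 2 (μ.pr W b) :=
        (Finset.sum_fiberwise_of_maps_to (fun b _ => Finset.mem_univ (f b)) _).symm
    _ ≤ ∑ a : A, μ.pr (fun ω => f (W ω)) a * Real.logb 2 (μ.pr (fun ω => f (W ω)) a) :=
        Finset.sum_le_sum fun a _ => key a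

lemma pr_comp_inj (μ : FinPMF Ω) {A B : Type*} [DecidableEq A] [Fintype B] [DecidableEq B]
    (W : Ω → B) (f : B → A) (hf : Function.Injective f) (b : B) :
    μ.pr (fun ω => f (W ω)) (f b) = μ.pr W b := by
  rw [μ.pr_comp' W f (f b), Finset.sum_eq_single b]
  · simp
  · intro b' _ hb'; exact if_neg (fun h => hb' (hf h))
  · simp

lemma H_comp_inj (μ : FinPMF Ω) {A B : Type*} [Fintype A] [DecidableEq A]
    [Fintype B] [DecidableEq B] (W : Ω → B) (f : B → A) (hf : Function.Injective f) :
    μ.H (fun ω => f (W ω)) = μ.H W := by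
  simp only [H, neg_inj]
  have h0 : ∀ a ∈ (Finset.univ : Finset A), a ∉ Finset.univ.image f →
      μ.pr (fun ω => f (W ω)) a * Real.logb 2 (μ.pr (fun ω => f (W ω)) a) = 0 := by
    intro a _ ha
    have hz : μ.pr (fun ω => f (W ω)) a = 0 := by
      rw [μ.pr_comp' W f a]
      refine Finset.sum_eq_zero fun b _ => ?_
      have : f b ≠ a := fun h => ha (Finset.mem_image.2 ⟨b, Finset.mem_univ b, h⟩)
      simp [this]
    simp [hz]
  rw [← Finset.sum_subset (Finset.subset_univ (Finset.univ.image f)) h0,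
      Finset.sum_image (fun x _ y _ h => hf h)]
  exact Finset.sum_congr rfl fun b _ => by rw [μ.pr_comp_inj W f hf]


lemma gibbs {A : Type*} [Fintype A] (p r : A → ℝ) (hp : ∀ a, 0 ≤ p a) (hr : ∀ a, 0 ≤ r a)
    (hsum : ∑ a, r a ≤ ∑ a, p a) (hsupp : ∀ a, 0 < p a → 0 < r a) :
    ∑ a, p a * Real.logb 2 (r a) ≤ ∑ a, p a * Real.logb 2 (p a) := by
  have hlog2 : (0:ℝ) < Real.log 2 := Real.log_pos (by norm_num)
  have key : ∀ a, p a * Real.logb 2 (r a) - p a * Real.logb 2 (p a)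
      ≤ (r a - p a) / Real.log 2 := by
    intro a
    rcases eq_or_lt_of_le (hp a) with h | h
    · rw [← h]
      simp only [zero_mul, sub_zero, sub_self]
      exact div_nonneg (hr a) (le_of_lt hlog2)
    · have hra := hsupp a h
      have hlogs : Real.logb 2 (r a) - Real.logb 2 (p a)
          = Real.log (r a / p a) / Real.log 2 := by
        rw [Real.log_div (ne_of_gt hra) (ne_of_gt h), Real.logb, Real.logb]
        ring
      rw [← mul_sub, hlogs]
      have hle : Real.log (r a / p a) ≤ r a / p a - 1 :=
        Real.log_le_sub_one_of_pos (div_pos hra h)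
      calc p a * (Real.log (r a / p a) / Real.log 2)
          ≤ p a * ((r a / p a - 1) / Real.log 2) := by
            exact mul_le_mul_of_nonneg_left ((div_le_div_iff_of_pos_right hlog2).2 hle) (le_of_lt h)
        _ = (r a - p a) / Real.log 2 := by
            field_simp
  have hs := Finset.sum_le_sum (fun a (_ : a ∈ Finset.univ) => key a)
  rw [Finset.sum_sub_distrib] at hs
  have h2 : ∑ a, (r a - p a) / Real.log 2 = (∑ a, r a - ∑ a, p a) / Real.log 2 := by
    rw [← Finset.sum_div, Finset.sum_sub_distrib]
  rw [h2] at hs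
  have h3 : (∑ a, r a - ∑ a, p a) / Real.log 2 ≤ 0 :=
    div_nonpos_iff.2 (Or.inr ⟨by linarith, le_of_lt hlog2⟩)
  linarith

lemma H_indep' (μ : FinPMF Ω) {A B : Type*} [Fintype A] [DecidableEq A] [Fintype B]
    [DecidableEq B] (U : Ω → A) (V : Ω → B) (h : μ.Indep U V) :
    μ.H (fun ω => (U ω, V ω)) = μ.H U + μ.H V := by
  simp only [H]
  rw [Fintype.sum_prod_type]
  have key : ∀ u v, μ.pr (fun ω => (U ω, V ω)) (u, v)
        * Real.logb 2 (μ.pr (fun ω => (U ω, V ω)) (u, v))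
      = (μ.pr U u * Real.logb 2 (μ.pr U u)) * μ.pr V v
        + μ.pr U u * (μ.pr V v * Real.logb 2 (μ.pr V v)) := by
    intro u v
    rw [h u v]
    rcases eq_or_ne (μ.pr U u) 0 with h1 | h1
    · simp [h1]
    rcases eq_or_ne (μ.pr V v) 0 with h2 | h2
    · simp [h2]
    rw [Real.logb_mul h1 h2]
    ring
  have step : ∀ u, ∑ v, μ.pr (fun ω => (U ω, V ω)) (u, v)
        * Real.logb 2 (μ.pr (fun ω => (U ω, V ω)) (u, v))
      = (μ.pr U u * Real.logb 2 (μ.pr U u)) + μ.pr U u * ∑ v, μ.pr V v * Real.logb 2 (μ.pr V v) := by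
    intro u
    rw [Finset.sum_congr rfl fun v _ => key u v, Finset.sum_add_distrib,
        ← Finset.mul_sum, ← Finset.mul_sum, μ.sum_pr' V, mul_one]
  rw [Finset.sum_congr rfl fun u _ => step u, Finset.sum_add_distrib,
      ← Finset.sum_mul, μ.sum_pr' U, one_mul]
  ring


variable {𝒬 𝒰 𝒱 : Type*} [Fintype 𝒬] [DecidableEq 𝒬] [Fintype 𝒰] [DecidableEq 𝒰]
    [Fintype 𝒱] [DecidableEq 𝒱]

lemma marg_fst (μ : FinPMF Ω) {A B : Type*} [Fintype B] [DecidableEq A] [DecidableEq B]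
    (X : Ω → A) (Y : Ω → B) (a : A) :
    μ.pr X a = ∑ b, μ.pr (fun ω => (X ω, Y ω)) (a, b) := by
  simp only [pr]
  rw [Finset.sum_comm]
  refine Finset.sum_congr rfl fun ω _ => ?_
  by_cases h1 : X ω = a <;> simp [Prod.ext_iff, h1]

lemma marg2u (μ : FinPMF Ω) (Q : Ω → 𝒬) (U : Ω → 𝒰) (V : Ω → 𝒱) (q : 𝒬) (u : 𝒰) :
    μ.pr (fun ω => (Q ω, U ω)) (q, u) = ∑ v, μ.pr (fun ω => (Q ω, U ω, V ω)) (q, u, v) := by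
  simp only [pr]
  rw [Finset.sum_comm]
  refine Finset.sum_congr rfl fun ω _ => ?_
  by_cases h1 : Q ω = q <;> by_cases h2 : U ω = u <;> simp [Prod.ext_iff, h1, h2]

lemma marg2v (μ : FinPMF Ω) (Q : Ω → 𝒬) (U : Ω → 𝒰) (V : Ω → 𝒱) (q : 𝒬) (v : 𝒱) :
    μ.pr (fun ω => (Q ω, V ω)) (q, v) = ∑ u, μ.pr (fun ω => (Q ω, U ω, V ω)) (q, u, v) := by
  simp only [pr]
  rw [Finset.sum_comm]
  refine Finset.sum_congr rfl fun ω _ => ?_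
  by_cases h1 : Q ω = q <;> by_cases h2 : V ω = v <;> simp [Prod.ext_iff, h1, h2]

lemma marg1 (μ : FinPMF Ω) (Q : Ω → 𝒬) (U : Ω → 𝒰) (V : Ω → 𝒱) (q : 𝒬) :
    μ.pr Q q = ∑ u, ∑ v, μ.pr (fun ω => (Q ω, U ω, V ω)) (q, u, v) := by
  rw [μ.marg_fst Q (fun ω => (U ω, V ω)) q, Fintype.sum_prod_type]

lemma ssa (μ : FinPMF Ω) (Q : Ω → 𝒬) (U : Ω → 𝒰) (V : Ω → 𝒱) :
    μ.H Q + μ.H (fun ω => (Q ω, U ω, V ω))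
      ≤ μ.H (fun ω => (Q ω, U ω)) + μ.H (fun ω => (Q ω, V ω)) := by
  set p3 : 𝒬 × 𝒰 × 𝒱 → ℝ := μ.pr (fun ω => (Q ω, U ω, V ω)) with hp3
  set p2u : 𝒬 × 𝒰 → ℝ := μ.pr (fun ω => (Q ω, U ω)) with hp2u
  set p2v : 𝒬 × 𝒱 → ℝ := μ.pr (fun ω => (Q ω, V ω)) with hp2v
  set p1 : 𝒬 → ℝ := μ.pr Q with hp1
  have h3n : ∀ x, 0 ≤ p3 x := fun x => μ.pr_nonneg' _ x
  have h2un : ∀ x, 0 ≤ p2u x := fun x => μ.pr_nonneg' _ x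
  have h2vn : ∀ x, 0 ≤ p2v x := fun x => μ.pr_nonneg' _ x
  have h1n : ∀ x, 0 ≤ p1 x := fun x => μ.pr_nonneg' _ x
  have m2u : ∀ q u, p2u (q, u) = ∑ v, p3 (q, u, v) := fun q u => μ.marg2u Q U V q u
  have m2v : ∀ q v, p2v (q, v) = ∑ u, p3 (q, u, v) := fun q v => μ.marg2v Q U V q v
  have m1 : ∀ q, p1 q = ∑ u, ∑ v, p3 (q, u, v) := fun q => μ.marg1 Q U V q
  have m1u : ∀ q, p1 q = ∑ u, p2u (q, u) := by
    intro q; rw [m1]; exact Finset.sum_congr rfl fun u _ => (m2u q u).symm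
  have m1v : ∀ q, p1 q = ∑ v, p2v (q, v) := by
    intro q; rw [m1, Finset.sum_comm]; exact Finset.sum_congr rfl fun v _ => (m2v q v).symm
  -- dominance
  have d2u : ∀ q u v, p3 (q, u, v) ≤ p2u (q, u) := by
    intro q u v; rw [m2u]
    exact Finset.single_le_sum (fun v _ => h3n (q,u,v)) (Finset.mem_univ v)
  have d2v : ∀ q u v, p3 (q, u, v) ≤ p2v (q, v) := by
    intro q u v; rw [m2v]
    exact Finset.single_le_sum (fun u _ => h3n (q,u,v)) (Finset.mem_univ u)
  have d1 : ∀ q u, p2u (q, u) ≤ p1 q := by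
    intro q u; rw [m1u]
    exact Finset.single_le_sum (fun u _ => h2un (q,u)) (Finset.mem_univ u)
  set r : 𝒬 × 𝒰 × 𝒱 → ℝ := fun x => p2u (x.1, x.2.1) * p2v (x.1, x.2.2) / p1 x.1 with hr
  have hrn : ∀ x, 0 ≤ r x := fun x =>
    div_nonneg (mul_nonneg (h2un _) (h2vn _)) (h1n _)
  have hsupp : ∀ x, 0 < p3 x → 0 < r x := by
    rintro ⟨q, u, v⟩ h
    have h1 : 0 < p2u (q, u) := lt_of_lt_of_le h (d2u q u v)
    have h2 : 0 < p2v (q, v) := lt_of_lt_of_le h (d2v q u v)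
    have h0 : 0 < p1 q := lt_of_lt_of_le h1 (d1 q u)
    exact div_pos (mul_pos h1 h2) h0
  have hsum : ∑ x, r x = ∑ x, p3 x := by
    rw [μ.sum_pr' (fun ω => (Q ω, U ω, V ω))]
    rw [Fintype.sum_prod_type]
    have : ∀ q, ∑ y : 𝒰 × 𝒱, r (q, y) = p1 q := by
      intro q
      rw [Fintype.sum_prod_type]
      simp only [hr, div_eq_mul_inv]
      have step1 : ∀ u : 𝒰, ∑ v, p2u (q, u) * p2v (q, v) * (p1 q)⁻¹
          = (p2u (q, u) * (∑ v, p2v (q, v))) * (p1 q)⁻¹ := by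
        intro u
        rw [← Finset.sum_mul, ← Finset.mul_sum]
      rw [Finset.sum_congr rfl fun u _ => step1 u, ← Finset.sum_mul, ← Finset.sum_mul,
          ← m1u, ← m1v]
      rcases eq_or_ne (p1 q) 0 with h | h
      · simp [h]
      · field_simp
    rw [Finset.sum_congr rfl fun q _ => this q]
    rw [← μ.sum_pr' Q]
  have hgibbs := gibbs p3 r h3n hrn (le_of_eq hsum) hsupp
  -- expand logb r
  have expand : ∀ x : 𝒬 × 𝒰 × 𝒱, p3 x * Real.logb 2 (r x)
      = p3 x * Real.logb 2 (p2u (x.1, x.2.1)) + p3 x * Real.logb 2 (p2v (x.1, x.2.2))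
        - p3 x * Real.logb 2 (p1 x.1) := by
    rintro ⟨q, u, v⟩
    rcases eq_or_lt_of_le (h3n (q, u, v)) with h | h
    · rw [← h]; ring
    · have h1 : 0 < p2u (q, u) := lt_of_lt_of_le h (d2u q u v)
      have h2 : 0 < p2v (q, v) := lt_of_lt_of_le h (d2v q u v)
      have h0 : 0 < p1 q := lt_of_lt_of_le h1 (d1 q u)
      simp only [hr]
      rw [Real.logb_div (by positivity) (ne_of_gt h0), Real.logb_mul (ne_of_gt h1) (ne_of_gt h2)]
      ring
  have S1 : ∑ x : 𝒬 × 𝒰 × 𝒱, p3 x * Real.logb 2 (p2u (x.1, x.2.1))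
      = ∑ y : 𝒬 × 𝒰, p2u y * Real.logb 2 (p2u y) := by
    rw [Fintype.sum_prod_type, Fintype.sum_prod_type]
    refine Finset.sum_congr rfl fun q _ => ?_
    rw [Fintype.sum_prod_type]
    refine Finset.sum_congr rfl fun u _ => ?_
    dsimp only
    rw [← Finset.sum_mul, ← m2u]
  have S2 : ∑ x : 𝒬 × 𝒰 × 𝒱, p3 x * Real.logb 2 (p2v (x.1, x.2.2))
      = ∑ y : 𝒬 × 𝒱, p2v y * Real.logb 2 (p2v y) := by
    rw [Fintype.sum_prod_type, Fintype.sum_prod_type]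
    refine Finset.sum_congr rfl fun q _ => ?_
    rw [Fintype.sum_prod_type, Finset.sum_comm]
    refine Finset.sum_congr rfl fun v _ => ?_
    dsimp only
    rw [← Finset.sum_mul, ← m2v]
  have S3 : ∑ x : 𝒬 × 𝒰 × 𝒱, p3 x * Real.logb 2 (p1 x.1)
      = ∑ q, p1 q * Real.logb 2 (p1 q) := by
    rw [Fintype.sum_prod_type]
    refine Finset.sum_congr rfl fun q _ => ?_
    rw [Fintype.sum_prod_type]
    dsimp only
    have : ∀ u : 𝒰, ∑ v, p3 (q, u, v) * Real.logb 2 (p1 q)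
        = (∑ v, p3 (q, u, v)) * Real.logb 2 (p1 q) := fun u => (Finset.sum_mul ..).symm
    rw [Finset.sum_congr rfl fun u _ => this u, ← Finset.sum_mul, ← m1]
  rw [Finset.sum_congr rfl fun x _ => expand x, Finset.sum_sub_distrib,
      Finset.sum_add_distrib, S1, S2, S3] at hgibbs
  simp only [H]
  have e3 : μ.H (fun ω => (Q ω, U ω, V ω)) = -∑ x : 𝒬 × 𝒰 × 𝒱, p3 x * Real.logb 2 (p3 x) := rfl
  linarith [hgibbs]

end FinPMF


/-- Given `U ⊥ V`, `H(U) ≤ R1`, `H(V) ≤ R2`, `R ≥ I(Q;V|U) + R'`,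
`R ≥ I(Q;U|V) + R'`, and `H(X) ≤ I(Q;U,V) + R'`, we get `R + R1 ≥ H(X)`,
`R + R2 ≥ H(X)`, and if `R' = 0` also `2R ≥ H(X)`. -/
theorem stmt17 {Ω 𝒳 𝒬 𝒰 𝒱 : Type*} [Fintype Ω]
    [Fintype 𝒳] [DecidableEq 𝒳] [Fintype 𝒬] [DecidableEq 𝒬]
    [Fintype 𝒰] [DecidableEq 𝒰] [Fintype 𝒱] [DecidableEq 𝒱]
    (μ : FinPMF Ω) (X : Ω → 𝒳) (Q : Ω → 𝒬) (U : Ω → 𝒰) (V : Ω → 𝒱)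
    (R R1 R2 R' : ℝ) (hR : 0 ≤ R) (hR1 : 0 ≤ R1) (hR2 : 0 ≤ R2) (hR' : 0 ≤ R')
    (hInd : μ.Indep U V)
    (hHU : μ.H U ≤ R1) (hHV : μ.H V ≤ R2)
    (hRa : μ.CI Q V U + R' ≤ R) (hRb : μ.CI Q U V + R' ≤ R)
    (hHX : μ.H X ≤ μ.I2 Q (fun ω => (U ω, V ω)) + R') :
    (R' = 0 → μ.H X ≤ 2 * R) ∧ μ.H X ≤ R + R1 ∧ μ.H X ≤ R + R2 := by
  have hind := μ.H_indep' U V hInd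
  have hVU : μ.H (fun ω => (V ω, U ω)) = μ.H (fun ω => (U ω, V ω)) :=
    μ.H_comp_inj (fun ω => (U ω, V ω)) Prod.swap Prod.swap_injective
  have hQVU : μ.H (fun ω => (Q ω, V ω, U ω)) = μ.H (fun ω => (Q ω, U ω, V ω)) :=
    μ.H_comp_inj (fun ω => (Q ω, U ω, V ω)) (fun x => (x.1, x.2.2, x.2.1))
      (fun a b h => by
        obtain ⟨a1, a2, a3⟩ := a; obtain ⟨b1, b2, b3⟩ := b
        simp only [Prod.mk.injEq] at h ⊢
        tauto)
  have hQU : μ.H Q ≤ μ.H (fun ω => (Q ω, U ω)) :=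
    μ.H_comp_le' (fun ω => (Q ω, U ω)) Prod.fst
  have hQV : μ.H Q ≤ μ.H (fun ω => (Q ω, V ω)) :=
    μ.H_comp_le' (fun ω => (Q ω, V ω)) Prod.fst
  have hssa := μ.ssa Q U V
  simp only [FinPMF.CI] at hRa hRb
  simp only [FinPMF.I2] at hHX
  rw [hVU, hQVU] at hRa
  rw [hind] at hRa hRb hHX
  refine ⟨fun h0 => ?_, ?_, ?_⟩
  · rw [h0] at hRa hRb hHX
    linarith
  · linarith
  · linarith
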